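/- (Loop calculus for the binary alphabet) Let X = {0,1} and let ((b_i)_{i∈V}, (b_a)_{a∈F}) be a positive interior stationary point of the Bethe free energy of factor graph G, arising from BP messages (m_{i→a}, m_{a→i}). Then Z(G) = Z_Bethe · Σ_{E'⊆E} K_G(E'), where K_G(E') = ∏_{a∈F} ⟨∏_{i∈∂a,(i,a)∈E'} (X_i − η^i)/√(Var_{b_i}(X_i))⟩_{b_a} · ∏_{i∈V} ⟨((X_i − η^i)/√(Var_{b_i}(X_i)))^{d_i(E')}⟩_{b_i}, with η^i = b_i(1) and Var_{b_i}(X_i) = b_i(0) b_i(1), and moreover K_G(E') = 0 unless every variable node and every factor node has degree ≠ 1 in E' (i.e., E' is a generalized loop). -/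

import Mathlib

open Finset

noncomputable section

variable {V F : Type*} [Fintype V] [Fintype F] [DecidableEq V] [DecidableEq F]

/-- The factor neighbors of a variable node `i`. -/
def nbrs (N : F → Finset V) (i : V) : Finset F := Finset.univ.filter (fun a => i ∈ N a)

/-- The edge set of the factor graph, as a finset of pairs. -/
def edges (N : F → Finset V) : Finset (V × F) := Finset.univ.filter (fun p => p.1 ∈ N p.2)

/-- The real value of a `{0,1}`-valued variable. -/
def bval (x : Bool) : ℝ := if x then 1 else 0

/-- `Z_a = ∑_{x_{∂a}} f_a(x_{∂a}) ∏_{i ∈ ∂a} m_{i→a}(x_i)`. -/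
def Za (N : F → Finset V) (f : (a : F) → ({i // i ∈ N a} → Bool) → ℝ)
    (mva : V → F → Bool → ℝ) (a : F) : ℝ :=
  ∑ xa : {i // i ∈ N a} → Bool, f a xa * ∏ i : {i // i ∈ N a}, mva i.1 a (xa i)

/-- `Z_i = ∑_x h_i(x) ∏_{a ∈ ∂i} m_{a→i}(x)`. -/
def Zi (N : F → Finset V) (h : V → Bool → ℝ) (mav : V → F → Bool → ℝ) (i : V) : ℝ :=
  ∑ x : Bool, h i x * ∏ a ∈ nbrs N i, mav i a x

/-- `Z_{i,a} = ∑_x m_{i→a}(x) m_{a→i}(x)`. -/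
def Zia (mva mav : V → F → Bool → ℝ) (i : V) (a : F) : ℝ :=
  ∑ x : Bool, mva i a x * mav i a x

/-- `Z_Bethe = ∏_a Z_a ∏_i Z_i ∏_{(i,a)∈E} Z_{i,a}⁻¹`. -/
def ZBethe (N : F → Finset V) (f : (a : F) → ({i // i ∈ N a} → Bool) → ℝ)
    (h : V → Bool → ℝ) (mva mav : V → F → Bool → ℝ) : ℝ :=
  (∏ a : F, Za N f mva a) * (∏ i : V, Zi N h mav i) *
  ∏ p ∈ edges N, (Zia mva mav p.1 p.2)⁻¹

/-- The factor pseudo-marginal `b_a`. -/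
def bfa (N : F → Finset V) (f : (a : F) → ({i // i ∈ N a} → Bool) → ℝ)
    (mva : V → F → Bool → ℝ) (a : F) (xa : {i // i ∈ N a} → Bool) : ℝ :=
  f a xa * (∏ i : {i // i ∈ N a}, mva i.1 a (xa i)) / Za N f mva a

/-- The variable pseudo-marginal `b_i`. -/
def bvi (N : F → Finset V) (h : V → Bool → ℝ) (mav : V → F → Bool → ℝ)
    (i : V) (x : Bool) : ℝ :=
  h i x * (∏ a ∈ nbrs N i, mav i a x) / Zi N h mav i

/-- `η^i = b_i(1) = ⟨X_i⟩_{b_i}`. -/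
def etaOf (N : F → Finset V) (h : V → Bool → ℝ) (mav : V → F → Bool → ℝ) (i : V) : ℝ :=
  bvi N h mav i true

/-- The standardized variable `(X_i - η^i)/√(Var_{b_i}(X_i))`,
with `Var_{b_i}(X_i) = b_i(0) b_i(1)`. -/
def stdz (N : F → Finset V) (h : V → Bool → ℝ) (mav : V → F → Bool → ℝ)
    (i : V) (x : Bool) : ℝ :=
  (bval x - etaOf N h mav i) / Real.sqrt (bvi N h mav i false * bvi N h mav i true)

/-- The degree `d_i(E')` of a variable node in an edge subset. -/
def degInV (E' : Finset (V × F)) (i : V) : ℕ := (E'.filter (fun p => p.1 = i)).card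

/-- The degree `d_a(E')` of a factor node in an edge subset. -/
def degInF (E' : Finset (V × F)) (a : F) : ℕ := (E'.filter (fun p => p.2 = a)).card

/-- The loop weight
`K_G(E') = ∏_a ⟨∏_{i∈∂a,(i,a)∈E'} (X_i-η^i)/√Var⟩_{b_a} ∏_i ⟨((X_i-η^i)/√Var)^{d_i(E')}⟩_{b_i}`. -/
def KG (N : F → Finset V) (f : (a : F) → ({i // i ∈ N a} → Bool) → ℝ)
    (h : V → Bool → ℝ) (mva mav : V → F → Bool → ℝ) (E' : Finset (V × F)) : ℝ :=
  (∏ a : F, ∑ xa : {i // i ∈ N a} → Bool,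
      bfa N f mva a xa *
        ∏ i ∈ Finset.univ.filter (fun i : {i // i ∈ N a} => (i.1, a) ∈ E'),
          stdz N h mav i.1 (xa i)) *
  ∏ i : V, ∑ x : Bool, bvi N h mav i x * (stdz N h mav i x) ^ (degInV E' i)


section Aux
variable {N : F → Finset V} {f : (a : F) → ({i // i ∈ N a} → Bool) → ℝ}
  {h : V → Bool → ℝ} {mva mav : V → F → Bool → ℝ}

lemma Zi_pos (hh : ∀ i x, 0 < h i x)
    (hm2 : ∀ (i : V) (a : F), i ∈ N a → ∀ x, 0 < mav i a x) (i : V) :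
    0 < Zi N h mav i := by
  refine Finset.sum_pos (fun x _ => mul_pos (hh i x) (Finset.prod_pos fun a ha => ?_))
    ⟨true, Finset.mem_univ _⟩
  exact hm2 i a (by simpa [nbrs] using ha) x

lemma bvi_pos (hh : ∀ i x, 0 < h i x)
    (hm2 : ∀ (i : V) (a : F), i ∈ N a → ∀ x, 0 < mav i a x) (i : V) (x : Bool) :
    0 < bvi N h mav i x := by
  refine div_pos (mul_pos (hh i x) (Finset.prod_pos fun a ha => ?_)) (Zi_pos hh hm2 i)
  exact hm2 i a (by simpa [nbrs] using ha) x

lemma bvi_sum_one (hh : ∀ i x, 0 < h i x)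
    (hm2 : ∀ (i : V) (a : F), i ∈ N a → ∀ x, 0 < mav i a x) (i : V) :
    bvi N h mav i false + bvi N h mav i true = 1 := by
  have hz := (Zi_pos hh hm2 i).ne'
  have hZ : Zi N h mav i = h i false * (∏ a ∈ nbrs N i, mav i a false)
      + h i true * ∏ a ∈ nbrs N i, mav i a true := by
    rw [Zi, Fintype.sum_bool]; ring
  rw [bvi, bvi, ← add_div, ← hZ, div_self hz]

lemma stdz_mul (hh : ∀ i x, 0 < h i x)
    (hm2 : ∀ (i : V) (a : F), i ∈ N a → ∀ x, 0 < mav i a x) (i : V) (x y : Bool) :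
    stdz N h mav i x * stdz N h mav i y
      = (bval x - bvi N h mav i true) * (bval y - bvi N h mav i true) /
        (bvi N h mav i false * bvi N h mav i true) := by
  have hv : (0:ℝ) ≤ bvi N h mav i false * bvi N h mav i true :=
    (mul_pos (bvi_pos hh hm2 i false) (bvi_pos hh hm2 i true)).le
  rw [stdz, stdz, etaOf, div_mul_div_comm, Real.mul_self_sqrt hv]

lemma one_add_stdz_mul (hh : ∀ i x, 0 < h i x)
    (hm2 : ∀ (i : V) (a : F), i ∈ N a → ∀ x, 0 < mav i a x) (i : V) (x y : Bool) :
    1 + stdz N h mav i x * stdz N h mav i y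
      = if x = y then (bvi N h mav i y)⁻¹ else 0 := by
  have h0 := bvi_pos hh hm2 i false
  have h1 := bvi_pos hh hm2 i true
  have hb0 : bvi N h mav i false = 1 - bvi N h mav i true := by
    linarith [bvi_sum_one hh hm2 i]
  have ht : bvi N h mav i true ≠ 0 := h1.ne'
  have h1t : 1 - bvi N h mav i true ≠ 0 := by rw [← hb0]; exact h0.ne'
  rw [stdz_mul hh hm2, hb0]
  rcases x <;> rcases y <;> simp [bval, hb0] <;> field_simp <;> try ring
  all_goals try (left; trivial)

lemma stdz_mean_zero (hh : ∀ i x, 0 < h i x)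
    (hm2 : ∀ (i : V) (a : F), i ∈ N a → ∀ x, 0 < mav i a x) (i : V) :
    ∑ x : Bool, bvi N h mav i x * stdz N h mav i x = 0 := by
  have hb0 : bvi N h mav i false = 1 - bvi N h mav i true := by
    linarith [bvi_sum_one hh hm2 i]
  rw [Fintype.sum_bool]
  simp only [stdz, etaOf, bval]
  norm_num
  rw [hb0]
  ring

end Aux

section Aux2
variable {N : F → Finset V} {f : (a : F) → ({i // i ∈ N a} → Bool) → ℝ}
  {h : V → Bool → ℝ} {mva mav : V → F → Bool → ℝ}

lemma edge_eq (hh : ∀ i x, 0 < h i x)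
    (hm2 : ∀ (i : V) (a : F), i ∈ N a → ∀ x, 0 < mav i a x)
    (hfix1 : ∀ (i : V) (a : F), i ∈ N a → ∃ c : ℝ, 0 < c ∧ ∀ x,
      mva i a x = c * (h i x * ∏ a' ∈ (nbrs N i).erase a, mav i a' x))
    {i : V} {a : F} (hia : i ∈ N a) :
    (∀ x, mva i a x * mav i a x = Zia mva mav i a * bvi N h mav i x)
      ∧ 0 < Zia mva mav i a := by
  obtain ⟨c, hc, hcm⟩ := hfix1 i a hia
  have hanb : a ∈ nbrs N i := by simp [nbrs, hia]
  have hZi := Zi_pos hh hm2 i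
  have key : ∀ x, mva i a x * mav i a x = c * Zi N h mav i * bvi N h mav i x := by
    intro x
    have hpe := Finset.mul_prod_erase (nbrs N i) (fun a' => mav i a' x) hanb
    have hb : c * Zi N h mav i * bvi N h mav i x
        = c * (h i x * ∏ a' ∈ nbrs N i, mav i a' x) := by
      rw [bvi]; field_simp
    rw [hb, ← hpe, hcm x]; ring
  have hZia : Zia mva mav i a = c * Zi N h mav i := by
    have hs := bvi_sum_one hh hm2 i
    rw [Zia, Fintype.sum_bool, key, key]
    linear_combination (c * Zi N h mav i) * hs
  refine ⟨fun x => by rw [key, hZia], by rw [hZia]; exact mul_pos hc hZi⟩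

lemma marg_consistency (hh : ∀ i x, 0 < h i x)
    (hm2 : ∀ (i : V) (a : F), i ∈ N a → ∀ x, 0 < mav i a x)
    (hfix1 : ∀ (i : V) (a : F), i ∈ N a → ∃ c : ℝ, 0 < c ∧ ∀ x,
      mva i a x = c * (h i x * ∏ a' ∈ (nbrs N i).erase a, mav i a' x))
    (hfix2 : ∀ (i : V) (a : F) (hia : i ∈ N a), ∃ c : ℝ, 0 < c ∧ ∀ x,
      mav i a x = c * ∑ xa ∈ Finset.univ.filter
          (fun xa : {j // j ∈ N a} → Bool => xa ⟨i, hia⟩ = x),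
        f a xa * ∏ j ∈ Finset.univ.erase (⟨i, hia⟩ : {j // j ∈ N a}), mva j.1 a (xa j))
    {a : F} (hZa : 0 < Za N f mva a) {i : V} (hia : i ∈ N a) (x : Bool) :
    ∑ xa ∈ Finset.univ.filter (fun xa : {j // j ∈ N a} → Bool => xa ⟨i, hia⟩ = x),
      bfa N f mva a xa = bvi N h mav i x := by
  obtain ⟨c2, hc2, hcm2⟩ := hfix2 i a hia
  obtain ⟨hedge, hZiapos⟩ := edge_eq hh hm2 hfix1 hia
  have hslice : ∀ x : Bool,
      ∑ xa ∈ Finset.univ.filter (fun xa : {j // j ∈ N a} → Bool => xa ⟨i, hia⟩ = x),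
        bfa N f mva a xa
      = (Zia mva mav i a / (c2 * Za N f mva a)) * bvi N h mav i x := by
    intro x
    have step1 : ∀ xa ∈ Finset.univ.filter
        (fun xa : {j // j ∈ N a} → Bool => xa ⟨i, hia⟩ = x),
        bfa N f mva a xa = (mva i a x / Za N f mva a) *
          (f a xa * ∏ j ∈ Finset.univ.erase (⟨i, hia⟩ : {j // j ∈ N a}),
            mva j.1 a (xa j)) := by
      intro xa hxa
      have hx : xa ⟨i, hia⟩ = x := (Finset.mem_filter.mp hxa).2
      rw [bfa, ← Finset.mul_prod_erase Finset.univ (fun j => mva j.1 a (xa j))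
        (Finset.mem_univ (⟨i, hia⟩ : {j // j ∈ N a}))]
      simp only [hx]
      ring
    rw [Finset.sum_congr rfl step1, ← Finset.mul_sum]
    have h2 : (∑ xa ∈ Finset.univ.filter
        (fun xa : {j // j ∈ N a} → Bool => xa ⟨i, hia⟩ = x),
        f a xa * ∏ j ∈ Finset.univ.erase (⟨i, hia⟩ : {j // j ∈ N a}), mva j.1 a (xa j))
        = mav i a x / c2 := by
      rw [hcm2 x]; field_simp
    rw [h2]
    have h3 : mva i a x / Za N f mva a * (mav i a x / c2)
        = (mva i a x * mav i a x) / (c2 * Za N f mva a) := by ring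
    rw [h3, hedge x]
    ring
  have hall : ∑ xa : {j // j ∈ N a} → Bool, bfa N f mva a xa = 1 := by
    simp only [bfa]
    rw [← Finset.sum_div]
    have : (∑ xa : {j // j ∈ N a} → Bool,
        f a xa * ∏ j : {j // j ∈ N a}, mva j.1 a (xa j)) = Za N f mva a := rfl
    rw [this, div_self hZa.ne']
  have hsplit : (∑ xa ∈ Finset.univ.filter
        (fun xa : {j // j ∈ N a} → Bool => xa ⟨i, hia⟩ = true), bfa N f mva a xa)
      + ∑ xa ∈ Finset.univ.filter
        (fun xa : {j // j ∈ N a} → Bool => xa ⟨i, hia⟩ = false), bfa N f mva a xa = 1 := by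
    rw [← hall, ← Finset.sum_filter_add_sum_filter_not Finset.univ
      (fun xa : {j // j ∈ N a} → Bool => xa ⟨i, hia⟩ = true) (bfa N f mva a)]
    congr 1
    apply Finset.sum_congr _ (fun _ _ => rfl)
    ext xa; simp
  have hC : Zia mva mav i a / (c2 * Za N f mva a) = 1 := by
    have hs := bvi_sum_one hh hm2 i
    rw [hslice true, hslice false] at hsplit
    set C := Zia mva mav i a / (c2 * Za N f mva a)
    have : C * (bvi N h mav i false + bvi N h mav i true) = 1 := by linarith
    rwa [hs, mul_one] at this
  rw [hslice x, hC, one_mul]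

end Aux2

section Aux3
variable {N : F → Finset V}

lemma prod_edges_snd (g : V → F → ℝ) :
    ∏ p ∈ edges N, g p.1 p.2 = ∏ a : F, ∏ i : {i // i ∈ N a}, g i.1 a := by
  rw [← Finset.prod_fiberwise_of_maps_to (g := Prod.snd) (t := Finset.univ)
    (fun p _ => Finset.mem_univ _) (fun p => g p.1 p.2)]
  refine Finset.prod_congr rfl (fun a _ => ?_)
  rw [Finset.prod_coe_sort (N a) (fun i => g i a)]
  refine Finset.prod_nbij' (fun p => p.1) (fun i => (i, a)) ?_ ?_ ?_ ?_ ?_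
  · intro p hp
    simp only [Finset.mem_filter, edges, Finset.mem_univ, true_and] at hp
    rw [← hp.2]; exact hp.1
  · intro i hi; simp [edges, hi]
  · intro p hp
    simp only [Finset.mem_filter] at hp
    rw [← hp.2]
  · intro i hi; rfl
  · intro p hp
    simp only [Finset.mem_filter] at hp
    rw [← hp.2]

lemma prod_edges_fst (g : V → F → ℝ) :
    ∏ p ∈ edges N, g p.1 p.2 = ∏ i : V, ∏ a ∈ nbrs N i, g i a := by
  rw [← Finset.prod_fiberwise_of_maps_to (g := Prod.fst) (t := Finset.univ)
    (fun p _ => Finset.mem_univ _) (fun p => g p.1 p.2)]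
  refine Finset.prod_congr rfl (fun i _ => ?_)
  refine Finset.prod_nbij' (fun p => p.2) (fun a => (i, a)) ?_ ?_ ?_ ?_ ?_
  · intro p hp
    simp only [Finset.mem_filter, edges, Finset.mem_univ, true_and] at hp
    simp only [nbrs, Finset.mem_filter, Finset.mem_univ, true_and]
    rw [← hp.2]; exact hp.1
  · intro a ha
    simp only [nbrs, Finset.mem_filter, Finset.mem_univ, true_and] at ha
    simp [edges, ha]
  · intro p hp
    simp only [Finset.mem_filter] at hp
    rw [← hp.2]
  · intro a ha; rfl
  · intro p hp
    simp only [Finset.mem_filter] at hp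
    rw [← hp.2]

lemma prod_subset_snd {E' : Finset (V × F)} (hE' : E' ⊆ edges N) (g : V × F → ℝ) :
    ∏ a : F, ∏ i ∈ Finset.univ.filter (fun i : {i // i ∈ N a} => (i.1, a) ∈ E'), g (i.1, a)
      = ∏ e ∈ E', g e := by
  rw [← Finset.prod_fiberwise_of_maps_to (g := Prod.snd) (t := Finset.univ)
    (fun p _ => Finset.mem_univ _) g]
  refine Finset.prod_congr rfl (fun a _ => ?_)
  refine Finset.prod_bij (fun i _ => (i.1, a)) ?_ ?_ ?_ ?_
  · intro i hi
    simp only [Finset.mem_filter, Finset.mem_univ, true_and] at hi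
    simp [hi]
  · intro i hi j hj hij
    simp only [Prod.mk.injEq] at hij
    exact Subtype.ext hij.1
  · intro p hp
    simp only [Finset.mem_filter] at hp
    have hp1 : p.1 ∈ N a := by
      have := hE' hp.1
      simp only [edges, Finset.mem_filter, Finset.mem_univ, true_and] at this
      rw [← hp.2]; exact this
    refine ⟨⟨p.1, hp1⟩, ?_, ?_⟩
    · simp only [Finset.mem_filter, Finset.mem_univ, true_and]
      have : ((p.1 : V), a) = p := by rw [← hp.2]
      rw [this]; exact hp.1
    · show ((p.1 : V), a) = p
      rw [← hp.2]
  · intro i hi; rfl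

lemma prod_pow_deg {E' : Finset (V × F)} (g : V → ℝ) :
    ∏ i : V, g i ^ (degInV E' i) = ∏ e ∈ E', g e.1 := by
  rw [← Finset.prod_fiberwise_of_maps_to (g := Prod.fst) (t := Finset.univ)
    (fun p _ => Finset.mem_univ _) (fun e => g e.1)]
  refine Finset.prod_congr rfl (fun i _ => ?_)
  rw [Finset.prod_congr rfl (fun e he => by rw [(Finset.mem_filter.mp he).2] :
    ∀ e ∈ E'.filter (fun p => p.1 = i), g e.1 = g i)]
  rw [Finset.prod_const, degInV]

end Aux3

section Aux4
variable {N : F → Finset V} {f : (a : F) → ({i // i ∈ N a} → Bool) → ℝ}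
  {h : V → Bool → ℝ} {mva mav : V → F → Bool → ℝ}

lemma mem_edges {p : V × F} (hp : p ∈ edges N) : p.1 ∈ N p.2 := by
  simpa [edges] using hp

lemma pointwise_id (hh : ∀ i x, 0 < h i x)
    (hm1 : ∀ (i : V) (a : F), i ∈ N a → ∀ x, 0 < mva i a x)
    (hm2 : ∀ (i : V) (a : F), i ∈ N a → ∀ x, 0 < mav i a x)
    (hfix1 : ∀ (i : V) (a : F), i ∈ N a → ∃ c : ℝ, 0 < c ∧ ∀ x,
      mva i a x = c * (h i x * ∏ a' ∈ (nbrs N i).erase a, mav i a' x))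
    (hZa : ∀ a, 0 < Za N f mva a) (x : V → Bool) :
    (∏ a : F, f a (fun i => x i.1)) * ∏ i : V, h i (x i)
      = ZBethe N f h mva mav *
        ((∏ a : F, bfa N f mva a (fun i => x i.1)) * (∏ i : V, bvi N h mav i (x i)) *
          ∏ p ∈ edges N, (bvi N h mav p.1 (x p.1))⁻¹) := by
  have hA : (∏ a : F, bfa N f mva a (fun i => x i.1))
      = ((∏ a : F, f a (fun i => x i.1)) * ∏ p ∈ edges N, mva p.1 p.2 (x p.1))
        / ∏ a : F, Za N f mva a := by
    simp only [bfa]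
    rw [Finset.prod_div_distrib, Finset.prod_mul_distrib,
      prod_edges_snd (fun i a => mva i a (x i))]
  have hI : (∏ i : V, bvi N h mav i (x i))
      = ((∏ i : V, h i (x i)) * ∏ p ∈ edges N, mav p.1 p.2 (x p.1))
        / ∏ i : V, Zi N h mav i := by
    simp only [bvi]
    rw [Finset.prod_div_distrib, Finset.prod_mul_distrib,
      prod_edges_fst (fun i a => mav i a (x i))]
  have hE : ∀ p ∈ edges N, (bvi N h mav p.1 (x p.1))⁻¹
      = Zia mva mav p.1 p.2 / (mva p.1 p.2 (x p.1) * mav p.1 p.2 (x p.1)) := by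
    intro p hp
    have hmem := mem_edges hp
    obtain ⟨hedge, hZia⟩ := edge_eq hh hm2 hfix1 hmem
    rw [hedge (x p.1), div_mul_cancel_left₀ hZia.ne']
  rw [ZBethe, hA, hI, Finset.prod_congr rfl hE, Finset.prod_div_distrib,
    Finset.prod_mul_distrib, Finset.prod_inv_distrib]
  have hZA : (∏ a : F, Za N f mva a) ≠ 0 :=
    (Finset.prod_pos fun a _ => hZa a).ne'
  have hZI : (∏ i : V, Zi N h mav i) ≠ 0 :=
    (Finset.prod_pos fun i _ => Zi_pos hh hm2 i).ne'
  have hM1 : (∏ p ∈ edges N, mva p.1 p.2 (x p.1)) ≠ 0 :=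
    (Finset.prod_pos fun p hp => hm1 _ _ (mem_edges hp) _).ne'
  have hM2 : (∏ p ∈ edges N, mav p.1 p.2 (x p.1)) ≠ 0 :=
    (Finset.prod_pos fun p hp => hm2 _ _ (mem_edges hp) _).ne'
  have hZP : (∏ p ∈ edges N, Zia mva mav p.1 p.2) ≠ 0 :=
    (Finset.prod_pos fun p hp => (edge_eq hh hm2 hfix1 (mem_edges hp)).2).ne'
  field_simp

end Aux4

section Aux5
variable {N : F → Finset V} {f : (a : F) → ({i // i ∈ N a} → Bool) → ℝ}
  {h : V → Bool → ℝ} {mva mav : V → F → Bool → ℝ}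

/-- The standardized value attached to an edge from the factor-side configuration. -/
def S1fun (N : F → Finset V) (h : V → Bool → ℝ) (mav : V → F → Bool → ℝ)
    (xa : (a : F) → ({i // i ∈ N a} → Bool)) (e : V × F) : ℝ :=
  if hp : e.1 ∈ N e.2 then stdz N h mav e.1 (xa e.2 ⟨e.1, hp⟩) else 0

/-- The delta kernel attached to an edge. -/
def Dfun (N : F → Finset V) (h : V → Bool → ℝ) (mav : V → F → Bool → ℝ)
    (xa : (a : F) → ({i // i ∈ N a} → Bool)) (y : V → Bool) (e : V × F) : ℝ :=
  if hp : e.1 ∈ N e.2 then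
    (if xa e.2 ⟨e.1, hp⟩ = y e.1 then (bvi N h mav e.1 (y e.1))⁻¹ else 0)
  else 0

lemma loop_sum (hh : ∀ i x, 0 < h i x)
    (hm2 : ∀ (i : V) (a : F), i ∈ N a → ∀ x, 0 < mav i a x) :
    ∑ E' ∈ (edges N).powerset, KG N f h mva mav E'
      = ∑ y : V → Bool,
          (∏ a : F, bfa N f mva a (fun i => y i.1)) * (∏ i : V, bvi N h mav i (y i))
            * ∏ p ∈ edges N, (bvi N h mav p.1 (y p.1))⁻¹ := by
  classical
  -- Step A: expand KG as a double sum over joint configurations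
  have stepA : ∀ E' ∈ (edges N).powerset, KG N f h mva mav E'
      = ∑ xa : (a : F) → ({i // i ∈ N a} → Bool), ∑ y : V → Bool,
          ((∏ a : F, bfa N f mva a (xa a)) * ∏ i : V, bvi N h mav i (y i)) *
            ∏ e ∈ E', (S1fun N h mav xa e * stdz N h mav e.1 (y e.1)) := by
    intro E' hE'
    rw [Finset.mem_powerset] at hE'
    rw [KG, Finset.prod_univ_sum, Finset.prod_univ_sum, Fintype.piFinset_univ,
      Fintype.piFinset_univ, Finset.sum_mul_sum]
    refine Finset.sum_congr rfl fun xa _ => Finset.sum_congr rfl fun y _ => ?_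
    have h1 : ∀ a : F, (∏ i ∈ Finset.univ.filter
          (fun i : {i // i ∈ N a} => (i.1, a) ∈ E'), stdz N h mav i.1 ((xa a) i))
        = ∏ i ∈ Finset.univ.filter
          (fun i : {i // i ∈ N a} => (i.1, a) ∈ E'), S1fun N h mav xa (i.1, a) := by
      intro a
      refine Finset.prod_congr rfl fun i _ => ?_
      simp [S1fun, i.2]
    rw [Finset.prod_mul_distrib, Finset.prod_mul_distrib,
      prod_pow_deg (E' := E') (fun i => stdz N h mav i (y i)),
      Finset.prod_congr rfl (fun a _ => h1 a), prod_subset_snd hE' (S1fun N h mav xa),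
      Finset.prod_mul_distrib]
    ring
  -- expansion of the sum over subsets
  have hexp : ∀ u : V × F → ℝ,
      ∑ E' ∈ (edges N).powerset, ∏ e ∈ E', u e = ∏ e ∈ edges N, (1 + u e) := by
    intro u
    symm
    calc ∏ e ∈ edges N, (1 + u e) = ∏ e ∈ edges N, (u e + 1) :=
          Finset.prod_congr rfl fun e _ => add_comm _ _
      _ = ∑ t ∈ (edges N).powerset, (∏ e ∈ t, u e) * ∏ e ∈ (edges N) \ t, (1:ℝ) :=
          Finset.prod_add u (fun _ => (1:ℝ)) (edges N)
      _ = ∑ t ∈ (edges N).powerset, ∏ e ∈ t, u e := by simp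
  -- delta identity on edges
  have hdelta : ∀ (xa : (a : F) → ({i // i ∈ N a} → Bool)) (y : V → Bool),
      ∀ e ∈ edges N,
        1 + S1fun N h mav xa e * stdz N h mav e.1 (y e.1) = Dfun N h mav xa y e := by
    intro xa y e he
    have hp := mem_edges he
    simp only [S1fun, Dfun, dif_pos hp]
    exact one_add_stdz_mul hh hm2 e.1 _ _
  rw [Finset.sum_congr rfl stepA, Finset.sum_comm]
  calc ∑ xa : (a : F) → ({i // i ∈ N a} → Bool), ∑ E' ∈ (edges N).powerset,
        ∑ y : V → Bool,
          ((∏ a : F, bfa N f mva a (xa a)) * ∏ i : V, bvi N h mav i (y i)) *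
            ∏ e ∈ E', (S1fun N h mav xa e * stdz N h mav e.1 (y e.1))
      = ∑ xa : (a : F) → ({i // i ∈ N a} → Bool), ∑ y : V → Bool,
          ((∏ a : F, bfa N f mva a (xa a)) * ∏ i : V, bvi N h mav i (y i)) *
            ∏ e ∈ edges N, Dfun N h mav xa y e := by
        refine Finset.sum_congr rfl fun xa _ => ?_
        rw [Finset.sum_comm]
        refine Finset.sum_congr rfl fun y _ => ?_
        rw [← Finset.mul_sum,
          hexp (fun e => S1fun N h mav xa e * stdz N h mav e.1 (y e.1)),
          Finset.prod_congr rfl (hdelta xa y)]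
    _ = ∑ y : V → Bool, ∑ xa : (a : F) → ({i // i ∈ N a} → Bool),
          ((∏ a : F, bfa N f mva a (xa a)) * ∏ i : V, bvi N h mav i (y i)) *
            ∏ e ∈ edges N, Dfun N h mav xa y e := Finset.sum_comm
    _ = ∑ y : V → Bool,
          (∏ a : F, bfa N f mva a (fun i => y i.1)) * (∏ i : V, bvi N h mav i (y i))
            * ∏ p ∈ edges N, (bvi N h mav p.1 (y p.1))⁻¹ := by
        refine Finset.sum_congr rfl fun y _ => ?_
        rw [Fintype.sum_eq_single (fun a => (fun i : {i // i ∈ N a} => y i.1)) ?_]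
        · have hD : ∀ e ∈ edges N,
              Dfun N h mav (fun a => (fun i : {i // i ∈ N a} => y i.1)) y e
                = (bvi N h mav e.1 (y e.1))⁻¹ := by
            intro e he
            have hp := mem_edges he
            simp [Dfun, dif_pos hp]
          rw [Finset.prod_congr rfl hD]
        · intro xa hne
          obtain ⟨a, ha⟩ := Function.ne_iff.mp hne
          obtain ⟨i, hi⟩ := Function.ne_iff.mp ha
          have hmem : (i.1, a) ∈ edges N := by simp [edges, i.2]
          have hz : Dfun N h mav xa y (i.1, a) = 0 := by
            simp only [Dfun, dif_pos (show ((i.1, a) : V × F).1 ∈ N a from i.2)]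
            rw [if_neg]
            exact fun hc => hi (by simpa using hc)
          rw [Finset.prod_eq_zero hmem hz, mul_zero]

end Aux5

section Aux6
variable {N : F → Finset V} {f : (a : F) → ({i // i ∈ N a} → Bool) → ℝ}
  {h : V → Bool → ℝ} {mva mav : V → F → Bool → ℝ}

lemma KG_zero_of_degV (hh : ∀ i x, 0 < h i x)
    (hm2 : ∀ (i : V) (a : F), i ∈ N a → ∀ x, 0 < mav i a x)
    {E' : Finset (V × F)} {i : V} (hdi : degInV E' i = 1) :
    KG N f h mva mav E' = 0 := by
  rw [KG, Finset.prod_eq_zero (Finset.mem_univ i) ?_, mul_zero]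
  rw [hdi]
  simpa [pow_one] using stdz_mean_zero hh hm2 i

lemma KG_zero_of_degF (hh : ∀ i x, 0 < h i x)
    (hm2 : ∀ (i : V) (a : F), i ∈ N a → ∀ x, 0 < mav i a x)
    (hfix1 : ∀ (i : V) (a : F), i ∈ N a → ∃ c : ℝ, 0 < c ∧ ∀ x,
      mva i a x = c * (h i x * ∏ a' ∈ (nbrs N i).erase a, mav i a' x))
    (hfix2 : ∀ (i : V) (a : F) (hia : i ∈ N a), ∃ c : ℝ, 0 < c ∧ ∀ x,
      mav i a x = c * ∑ xa ∈ Finset.univ.filter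
          (fun xa : {j // j ∈ N a} → Bool => xa ⟨i, hia⟩ = x),
        f a xa * ∏ j ∈ Finset.univ.erase (⟨i, hia⟩ : {j // j ∈ N a}), mva j.1 a (xa j))
    (hZa : ∀ a, 0 < Za N f mva a)
    {E' : Finset (V × F)} (hE' : E' ⊆ edges N) {a : F} (hda : degInF E' a = 1) :
    KG N f h mva mav E' = 0 := by
  classical
  obtain ⟨e0, he0⟩ := Finset.card_eq_one.mp hda
  have he0m : e0 ∈ E' ∧ e0.2 = a := by
    have : e0 ∈ E'.filter (fun p => p.2 = a) := by rw [he0]; exact Finset.mem_singleton_self _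
    simpa using this
  have hi0 : e0.1 ∈ N a := by
    have := mem_edges (hE' he0m.1)
    rwa [he0m.2] at this
  have hT : Finset.univ.filter (fun i : {i // i ∈ N a} => (i.1, a) ∈ E')
      = {(⟨e0.1, hi0⟩ : {i // i ∈ N a})} := by
    ext i
    simp only [Finset.mem_filter, Finset.mem_univ, true_and, Finset.mem_singleton]
    constructor
    · intro hmem
      have : (i.1, a) ∈ E'.filter (fun p => p.2 = a) := by simp [hmem]
      rw [he0, Finset.mem_singleton] at this
      apply Subtype.ext
      show i.1 = e0.1
      rw [← this]
    · intro hi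
      have he0e : e0 = (e0.1, a) := by
        rw [← he0m.2]
      rw [hi]
      show ((e0.1 : V), a) ∈ E'
      rw [← he0e]
      exact he0m.1
  rw [KG, Finset.prod_eq_zero (Finset.mem_univ a) ?_, zero_mul]
  rw [hT]
  calc ∑ xa : {i // i ∈ N a} → Bool, bfa N f mva a xa *
        ∏ i ∈ {(⟨e0.1, hi0⟩ : {i // i ∈ N a})}, stdz N h mav i.1 (xa i)
      = ∑ xa : {i // i ∈ N a} → Bool, bfa N f mva a xa *
          stdz N h mav e0.1 (xa ⟨e0.1, hi0⟩) := by
        refine Finset.sum_congr rfl fun xa _ => ?_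
        rw [Finset.prod_singleton]
    _ = ∑ x : Bool, ∑ xa ∈ Finset.univ.filter
          (fun xa : {i // i ∈ N a} → Bool => xa ⟨e0.1, hi0⟩ = x),
          bfa N f mva a xa * stdz N h mav e0.1 (xa ⟨e0.1, hi0⟩) := by
        rw [Finset.sum_fiberwise_of_maps_to (fun xa _ => Finset.mem_univ _)]
    _ = ∑ x : Bool, bvi N h mav e0.1 x * stdz N h mav e0.1 x := by
        refine Finset.sum_congr rfl fun x _ => ?_
        have : ∀ xa ∈ Finset.univ.filter
            (fun xa : {i // i ∈ N a} → Bool => xa ⟨e0.1, hi0⟩ = x),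
            bfa N f mva a xa * stdz N h mav e0.1 (xa ⟨e0.1, hi0⟩)
              = bfa N f mva a xa * stdz N h mav e0.1 x := by
          intro xa hxa
          rw [(Finset.mem_filter.mp hxa).2]
        rw [Finset.sum_congr rfl this, ← Finset.sum_mul,
          marg_consistency hh hm2 hfix1 hfix2 (hZa a) hi0 x]
    _ = 0 := stdz_mean_zero hh hm2 e0.1

end Aux6

/-- **loop calculus for the binary alphabet.**
At a positive interior BP fixed point of a binary factor graph,
`Z(G) = Z_Bethe ∑_{E' ⊆ E} K_G(E')`, and `K_G(E') = 0` unless `E'` is a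
generalized loop (every variable and factor node has degree `≠ 1` in `E'`). -/
theorem binary_loop_calculus
    (N : F → Finset V)
    (f : (a : F) → ({i // i ∈ N a} → Bool) → ℝ)
    (h : V → Bool → ℝ)
    (mva mav : V → F → Bool → ℝ)
    (hh : ∀ i x, 0 < h i x)
    (hf : ∀ a xa, 0 ≤ f a xa)
    (hslice : ∀ (a : F) (i : {i // i ∈ N a}) (z : Bool),
      ∃ xa : {i // i ∈ N a} → Bool, xa i = z ∧ 0 < f a xa)
    (hm1 : ∀ (i : V) (a : F), i ∈ N a → ∀ x, 0 < mva i a x)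
    (hm2 : ∀ (i : V) (a : F), i ∈ N a → ∀ x, 0 < mav i a x)
    (hfix1 : ∀ (i : V) (a : F), i ∈ N a → ∃ c : ℝ, 0 < c ∧ ∀ x,
      mva i a x = c * (h i x * ∏ a' ∈ (nbrs N i).erase a, mav i a' x))
    (hfix2 : ∀ (i : V) (a : F) (hia : i ∈ N a), ∃ c : ℝ, 0 < c ∧ ∀ x,
      mav i a x = c * ∑ xa ∈ Finset.univ.filter
          (fun xa : {j // j ∈ N a} → Bool => xa ⟨i, hia⟩ = x),
        f a xa * ∏ j ∈ Finset.univ.erase (⟨i, hia⟩ : {j // j ∈ N a}), mva j.1 a (xa j)) :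
    (∑ x : V → Bool, (∏ a : F, f a (fun i => x i.1)) * ∏ i : V, h i (x i)
      = ZBethe N f h mva mav * ∑ E' ∈ (edges N).powerset, KG N f h mva mav E') ∧
    (∀ E' ∈ (edges N).powerset, KG N f h mva mav E' ≠ 0 →
      (∀ i : V, degInV E' i ≠ 1) ∧ (∀ a : F, degInF E' a ≠ 1)) := by
  classical
  by_cases hdeg : ∃ a, ∀ xa, f a xa = 0
  · obtain ⟨a0, ha0⟩ := hdeg
    have hZa0 : Za N f mva a0 = 0 := by
      rw [Za]; exact Finset.sum_eq_zero fun xa _ => by rw [ha0, zero_mul]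
    have hKG0 : ∀ E', KG N f h mva mav E' = 0 := by
      intro E'
      rw [KG, Finset.prod_eq_zero (Finset.mem_univ a0) ?_, zero_mul]
      exact Finset.sum_eq_zero fun xa _ => by
        rw [bfa, ha0, zero_mul, zero_div, zero_mul]
    constructor
    · rw [Finset.sum_eq_zero (fun x _ => by
        rw [Finset.prod_eq_zero (Finset.mem_univ a0) (ha0 _), zero_mul] :
        ∀ x ∈ (Finset.univ : Finset (V → Bool)),
          (∏ a : F, f a (fun i => x i.1)) * ∏ i : V, h i (x i) = 0)]
      rw [ZBethe, Finset.prod_eq_zero (Finset.mem_univ a0) hZa0, zero_mul, zero_mul,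
        zero_mul]
    · intro E' _ hKG
      exact absurd (hKG0 E') hKG
  · push_neg at hdeg
    have hZa : ∀ a, 0 < Za N f mva a := by
      intro a
      obtain ⟨xa0, hxa0⟩ := hdeg a
      refine Finset.sum_pos' (fun xa _ => mul_nonneg (hf a xa)
        (Finset.prod_nonneg fun i _ => (hm1 i.1 a i.2 _).le))
        ⟨xa0, Finset.mem_univ _, ?_⟩
      exact mul_pos ((hf a xa0).lt_of_ne (Ne.symm hxa0))
        (Finset.prod_pos fun i _ => hm1 i.1 a i.2 _)
    refine ⟨?_, ?_⟩
    · rw [loop_sum hh hm2, Finset.mul_sum]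
      exact Finset.sum_congr rfl fun x _ => pointwise_id hh hm1 hm2 hfix1 hZa x
    · intro E' hE' hKG
      rw [Finset.mem_powerset] at hE'
      exact ⟨fun i hdi => hKG (KG_zero_of_degV hh hm2 hdi),
        fun a hda => hKG (KG_zero_of_degF hh hm2 hfix1 hfix2 hZa hE' hda)⟩
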